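/- arXiv:2211.06019 — 4 statements merged into one kernel-verified Lean document; each statement's English description precedes it below -/
import Mathlib

section
/- For every integer N ≥ 2, ∑_{p | N} (log p)/(p(p² − 1)) < 0.186, where the sum is over primes p dividing N. -/
open Complex Finset

noncomputable section

/-- The set `C_N` of integer matrices `[[a,b],[0,d]]` with `ad = N`, `a ≥ 1`,
`0 ≤ b ≤ d-1` and `gcd(a,b,d) = 1`, encoded as triples `(a, b, d)` of naturals. -/
def CN (N : ℕ) : Finset (ℕ × ℕ × ℕ) :=
  ((Finset.range (N + 1)) ×ˢ (Finset.range (N + 1)) ×ˢ (Finset.range (N + 1))).filter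
    (fun g => g.1 * g.2.2 = N ∧ 1 ≤ g.1 ∧ g.2.1 < g.2.2 ∧
      Nat.gcd g.1 (Nat.gcd g.2.1 g.2.2) = 1)

/-- `ψ(N) = N ∏_{p ∣ N} (1 + 1/p)`. -/
def psi (N : ℕ) : ℝ := N * ∏ p ∈ N.primeFactors, (1 + 1 / (p : ℝ))

/-- `λ_N = ∑_{p^n ∥ N} ((p^n - 1)/(p^(n-1) (p² - 1))) log p`. -/
def lam (N : ℕ) : ℝ :=
  ∑ p ∈ N.primeFactors,
    (((p : ℝ) ^ (N.factorization p) - 1) /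
      ((p : ℝ) ^ (N.factorization p - 1) * ((p : ℝ) ^ 2 - 1))) * Real.log p

/-- `κ_N = ∑_{p ∣ N} (log p)/p`. -/
def kap (N : ℕ) : ℝ := ∑ p ∈ N.primeFactors, Real.log p / p

/-- `q = e^{2πiz}`. -/
def qpar (z : ℂ) : ℂ := Complex.exp (2 * Real.pi * Complex.I * z)

/-- The modular discriminant `Δ(z) = q ∏_{n ≥ 1} (1 - qⁿ)^24`. -/
def Delta (z : ℂ) : ℂ := qpar z * ∏' n : ℕ, (1 - qpar z ^ (n + 1)) ^ 24

/-- The normalized weight-4 Eisenstein series `E₄(z) = 1 + 240 ∑_{n ≥ 1} σ₃(n) qⁿ`. -/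
def E4 (z : ℂ) : ℂ :=
  1 + 240 * ∑' n : ℕ, (∑ d ∈ (n + 1).divisors, (d : ℂ) ^ 3) * qpar z ^ (n + 1)

/-- The modular `j`-invariant, `j = E₄³/Δ`. -/
def jinv (z : ℂ) : ℂ := E4 z ^ 3 / Delta z

/-- `τ_γ = (aτ + b)/d` for `γ = (a,b,d)`. -/
def tauG (g : ℕ × ℕ × ℕ) (z : ℂ) : ℂ := ((g.1 : ℂ) * z + (g.2.1 : ℂ)) / (g.2.2 : ℂ)

/-- `S_N(τ) = ∑_{γ ∈ C_N} log max(1, |j(τ_γ)|)`. -/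
def SN (N : ℕ) (z : ℂ) : ℝ :=
  ∑ g ∈ CN N, Real.log (max 1 ‖jinv (tauG g z)‖)

/-- The standard fundamental domain
`F = {τ : Im τ > 0, |τ| ≥ 1, -1/2 < Re τ ≤ 1/2, and Re τ ≥ 0 if |τ| = 1}`. -/
def Fdom : Set ℂ :=
  {z | 0 < z.im ∧ 1 ≤ ‖z‖ ∧ -(1/2) < z.re ∧ z.re ≤ 1/2 ∧
    (‖z‖ = 1 → 0 ≤ z.re)}

/-- Action of `SL₂(ℤ)` on the upper half-plane by fractional linear transformations. -/
def mobius (g : Matrix.SpecialLinearGroup (Fin 2) ℤ) (z : ℂ) : ℂ :=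
  (((g : Matrix (Fin 2) (Fin 2) ℤ) 0 0 : ℂ) * z + ((g : Matrix (Fin 2) (Fin 2) ℤ) 0 1 : ℂ)) /
    (((g : Matrix (Fin 2) (Fin 2) ℤ) 1 0 : ℂ) * z + ((g : Matrix (Fin 2) (Fin 2) ℤ) 1 1 : ℂ))

/-- Height of an integer polynomial in two variables:
`h(P) = log max |coefficients|`. -/
def hPol (P : MvPolynomial (Fin 2) ℤ) : ℝ :=
  Real.log ((P.support.sup fun m => (MvPolynomial.coeff m P).natAbs : ℕ) : ℝ)

/-- `P = Φ_N`, the classical modular polynomial: for every `τ` in the upper half-plane,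
`P(X, j(τ)) = ∏_{γ ∈ C_N} (X - j(τ_γ))`. -/
def IsModPoly (N : ℕ) (P : MvPolynomial (Fin 2) ℤ) : Prop :=
  ∀ z : ℂ, 0 < z.im →
    MvPolynomial.aeval
      (fun i : Fin 2 => if i = 0 then (Polynomial.X : Polynomial ℂ)
        else Polynomial.C (jinv z)) P
      = ∏ g ∈ CN N, (Polynomial.X - Polynomial.C (jinv (tauG g z)))


private lemma aux_log_le_of_pow_le {p k m : ℕ} (hk : 0 < k) (h : p ^ k ≤ 2 ^ m) :
    Real.log p ≤ (m : ℝ) / k * Real.log 2 := by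
  rcases Nat.eq_zero_or_pos p with hp | hp
  · subst hp
    simp only [Nat.cast_zero, Real.log_zero]
    positivity
  have h1 : Real.log ((p : ℝ) ^ k) ≤ Real.log ((2 : ℝ) ^ m) := by
    apply Real.log_le_log (by positivity)
    exact_mod_cast h
  rw [Real.log_pow, Real.log_pow] at h1
  have hk' : (0 : ℝ) < k := by exact_mod_cast hk
  rw [div_mul_eq_mul_div, le_div_iff₀ hk']
  linarith

private lemma aux_log_le_100 : Real.log 100 ≤ 4.61 := by
  have h2 : Real.log 100 = 2 * Real.log 10 := by
    rw [show (100:ℝ) = 10 ^ 2 by norm_num, Real.log_pow]; push_cast; ring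
  have := aux_log_le_of_pow_le (p := 10) (k := 59) (m := 196) (by norm_num) (by norm_num)
  have L2 := Real.log_two_lt_d9
  norm_num at this
  linarith

private lemma aux_tail_term_bound {p : ℕ} (hp : 100 ≤ p) :
    Real.log p / (p * ((p : ℝ) ^ 2 - 1)) ≤ 0.046 * (1 / ((p : ℝ) - 1) - 1 / p) := by
  have hp' : (100 : ℝ) ≤ (p : ℝ) := by exact_mod_cast hp
  have hlog : Real.log p ≤ 4.61 + (p : ℝ) / 100 - 1 := by
    have h1 : Real.log ((p : ℝ) / 100) ≤ (p : ℝ) / 100 - 1 :=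
      Real.log_le_sub_one_of_pos (by positivity)
    have h2 : Real.log ((p : ℝ) / 100) = Real.log p - Real.log 100 :=
      Real.log_div (by positivity) (by norm_num)
    have := aux_log_le_100
    linarith
  have key : Real.log p ≤ 0.046 * ((p : ℝ) + 1) := by linarith
  have h3 : (1 : ℝ) / ((p : ℝ) - 1) - 1 / p = 1 / (((p : ℝ) - 1) * p) := by
    rw [div_sub_div _ _ (by linarith) (by positivity)]
    congr 1
    ring
  rw [h3]
  have hd1 : (0 : ℝ) < ((p : ℝ) - 1) * (p : ℝ) := by nlinarith
  have hd2 : (0 : ℝ) < (p : ℝ) * ((p : ℝ) ^ 2 - 1) := by nlinarith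
  rw [div_le_iff₀ hd2, mul_comm (0.046 : ℝ), mul_assoc, div_mul_eq_mul_div, le_div_iff₀ hd1]
  nlinarith [key, hd1]

private lemma aux_telescope (M : ℕ) (T : Finset ℕ) (hT : ∀ n ∈ T, 100 ≤ n ∧ n ≤ M) :
    ∑ n ∈ T, ((1 : ℝ) / ((n : ℝ) - 1) - 1 / n) ≤ 1 / 99 := by
  have hsub : T ⊆ Finset.Icc 100 M := fun n hn => Finset.mem_Icc.2 (hT n hn)
  have h1 : ∑ n ∈ T, ((1 : ℝ) / ((n : ℝ) - 1) - 1 / n)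
      ≤ ∑ n ∈ Finset.Icc 100 M, ((1 : ℝ) / ((n : ℝ) - 1) - 1 / n) := by
    apply Finset.sum_le_sum_of_subset_of_nonneg hsub
    intro n hn _
    have h100 : (100 : ℝ) ≤ (n : ℝ) := by exact_mod_cast (Finset.mem_Icc.1 hn).1
    rw [sub_nonneg]
    apply div_le_div_of_nonneg_left (by norm_num) (by linarith) (by linarith)
  have h2 : ∑ n ∈ Finset.Icc 100 M, ((1 : ℝ) / ((n : ℝ) - 1) - 1 / n)
      = ∑ i ∈ Finset.range (M + 1 - 100),
          ((fun j : ℕ => (1 : ℝ) / (99 + (j : ℝ))) i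
            - (fun j : ℕ => (1 : ℝ) / (99 + (j : ℝ))) (i + 1)) := by
    rw [← Finset.Ico_add_one_right_eq_Icc, Finset.sum_Ico_eq_sum_range]
    apply Finset.sum_congr rfl
    intro i _
    push_cast
    ring_nf
  refine le_trans h1 ?_
  rw [h2, Finset.sum_range_sub' (f := fun j : ℕ => (1 : ℝ) / (99 + (j : ℝ)))]
  have : (0:ℝ) ≤ 1 / (99 + ((M + 1 - 100 : ℕ) : ℝ)) := by positivity
  simp only [Nat.cast_zero]
  norm_num
  linarith

set_option maxHeartbeats 1000000 in
private lemma aux_head_bound :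
    ∑ p ∈ (Finset.range 100).filter Nat.Prime,
      Real.log p / (p * ((p : ℝ) ^ 2 - 1)) ≤ 0.18537 := by
  have L2 := Real.log_two_lt_d9
  have b3 : Real.log 3 ≤ (65/41 : ℝ) * Real.log 2 := by
    have := aux_log_le_of_pow_le (p := 3) (k := 41) (m := 65) (by norm_num) (by norm_num)
    norm_num at this
    exact this
  have b5 : Real.log 5 ≤ (137/59 : ℝ) * Real.log 2 := by
    have := aux_log_le_of_pow_le (p := 5) (k := 59) (m := 137) (by norm_num) (by norm_num)
    norm_num at this
    exact this
  have b7 : Real.log 7 ≤ (73/26 : ℝ) * Real.log 2 := by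
    have := aux_log_le_of_pow_le (p := 7) (k := 26) (m := 73) (by norm_num) (by norm_num)
    norm_num at this
    exact this
  have b11 : Real.log 11 ≤ (128/37 : ℝ) * Real.log 2 := by
    have := aux_log_le_of_pow_le (p := 11) (k := 37) (m := 128) (by norm_num) (by norm_num)
    norm_num at this
    exact this
  have b13 : Real.log 13 ≤ (211/57 : ℝ) * Real.log 2 := by
    have := aux_log_le_of_pow_le (p := 13) (k := 57) (m := 211) (by norm_num) (by norm_num)
    norm_num at this
    exact this
  have b17 : Real.log 17 ≤ (233/57 : ℝ) * Real.log 2 := by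
    have := aux_log_le_of_pow_le (p := 17) (k := 57) (m := 233) (by norm_num) (by norm_num)
    norm_num at this
    exact this
  have b19 : Real.log 19 ≤ (17/4 : ℝ) * Real.log 2 := by
    have := aux_log_le_of_pow_le (p := 19) (k := 4) (m := 17) (by norm_num) (by norm_num)
    norm_num at this
    exact this
  have b23 : Real.log 23 ≤ (95/21 : ℝ) * Real.log 2 := by
    have := aux_log_le_of_pow_le (p := 23) (k := 21) (m := 95) (by norm_num) (by norm_num)
    norm_num at this
    exact this
  have b29 : Real.log 29 ≤ (277/57 : ℝ) * Real.log 2 := by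
    have := aux_log_le_of_pow_le (p := 29) (k := 57) (m := 277) (by norm_num) (by decide)
    norm_num at this
    exact this
  have b31 : Real.log 31 ≤ (109/22 : ℝ) * Real.log 2 := by
    have := aux_log_le_of_pow_le (p := 31) (k := 22) (m := 109) (by norm_num) (by norm_num)
    norm_num at this
    exact this
  have b37 : Real.log 37 ≤ (99/19 : ℝ) * Real.log 2 := by
    have := aux_log_le_of_pow_le (p := 37) (k := 19) (m := 99) (by norm_num) (by norm_num)
    norm_num at this
    exact this
  have b41 : Real.log 41 ≤ (284/53 : ℝ) * Real.log 2 := by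
    have := aux_log_le_of_pow_le (p := 41) (k := 53) (m := 284) (by norm_num) (by decide)
    norm_num at this
    exact this
  have b43 : Real.log 43 ≤ (38/7 : ℝ) * Real.log 2 := by
    have := aux_log_le_of_pow_le (p := 43) (k := 7) (m := 38) (by norm_num) (by norm_num)
    norm_num at this
    exact this
  have b47 : Real.log 47 ≤ (50/9 : ℝ) * Real.log 2 := by
    have := aux_log_le_of_pow_le (p := 47) (k := 9) (m := 50) (by norm_num) (by norm_num)
    norm_num at this
    exact this
  have b53 : Real.log 53 ≤ (338/59 : ℝ) * Real.log 2 := by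
    have := aux_log_le_of_pow_le (p := 53) (k := 59) (m := 338) (by norm_num) (by decide)
    norm_num at this
    exact this
  have b59 : Real.log 59 ≤ (253/43 : ℝ) * Real.log 2 := by
    have := aux_log_le_of_pow_le (p := 59) (k := 43) (m := 253) (by norm_num) (by norm_num)
    norm_num at this
    exact this
  have b61 : Real.log 61 ≤ (172/29 : ℝ) * Real.log 2 := by
    have := aux_log_le_of_pow_le (p := 61) (k := 29) (m := 172) (by norm_num) (by norm_num)
    norm_num at this
    exact this
  have b67 : Real.log 67 ≤ (91/15 : ℝ) * Real.log 2 := by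
    have := aux_log_le_of_pow_le (p := 67) (k := 15) (m := 91) (by norm_num) (by norm_num)
    norm_num at this
    exact this
  have b71 : Real.log 71 ≤ (123/20 : ℝ) * Real.log 2 := by
    have := aux_log_le_of_pow_le (p := 71) (k := 20) (m := 123) (by norm_num) (by norm_num)
    norm_num at this
    exact this
  have b73 : Real.log 73 ≤ (130/21 : ℝ) * Real.log 2 := by
    have := aux_log_le_of_pow_le (p := 73) (k := 21) (m := 130) (by norm_num) (by norm_num)
    norm_num at this
    exact this
  have b79 : Real.log 79 ≤ (145/23 : ℝ) * Real.log 2 := by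
    have := aux_log_le_of_pow_le (p := 79) (k := 23) (m := 145) (by norm_num) (by norm_num)
    norm_num at this
    exact this
  have b83 : Real.log 83 ≤ (338/53 : ℝ) * Real.log 2 := by
    have := aux_log_le_of_pow_le (p := 83) (k := 53) (m := 338) (by norm_num) (by decide)
    norm_num at this
    exact this
  have b89 : Real.log 89 ≤ (136/21 : ℝ) * Real.log 2 := by
    have := aux_log_le_of_pow_le (p := 89) (k := 21) (m := 136) (by norm_num) (by norm_num)
    norm_num at this
    exact this
  have b97 : Real.log 97 ≤ (33/5 : ℝ) * Real.log 2 := by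
    have := aux_log_le_of_pow_le (p := 97) (k := 5) (m := 33) (by norm_num) (by norm_num)
    norm_num at this
    exact this
  rw [show (Finset.range 100).filter Nat.Prime =
    ({2,3,5,7,11,13,17,19,23,29,31,37,41,43,47,53,59,61,67,71,73,79,83,89,97} : Finset ℕ) from by decide]
  simp [Finset.sum_insert, Finset.mem_insert]
  linarith

/-- For every integer `N ≥ 2`, `∑_{p ∣ N} (log p)/(p(p² - 1)) < 0.186`. -/
theorem sum_log_div_p_mul_sq_sub_one_lt (N : ℕ) (hN : 2 ≤ N) :
    ∑ p ∈ N.primeFactors, Real.log p / (p * ((p : ℝ) ^ 2 - 1)) < 0.186 := by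
  have hN0 : N ≠ 0 := by omega
  rw [← Finset.sum_filter_add_sum_filter_not N.primeFactors (fun p => p < 100)]
  have hA : ∑ p ∈ N.primeFactors.filter (fun p => p < 100),
      Real.log p / (p * ((p : ℝ) ^ 2 - 1)) ≤ 0.18537 := by
    refine le_trans (Finset.sum_le_sum_of_subset_of_nonneg ?_ ?_) aux_head_bound
    · intro p hp
      rw [Finset.mem_filter] at hp ⊢
      exact ⟨Finset.mem_range.2 hp.2, Nat.prime_of_mem_primeFactors hp.1⟩
    · intro p hp _
      rw [Finset.mem_filter] at hp
      have h2 : 2 ≤ p := hp.2.two_le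
      have h2' : (2 : ℝ) ≤ (p : ℝ) := by exact_mod_cast h2
      have : (0:ℝ) < (p : ℝ) * ((p : ℝ) ^ 2 - 1) := by nlinarith
      have : 0 ≤ Real.log p := Real.log_nonneg (by linarith)
      positivity
  have hB : ∑ p ∈ N.primeFactors.filter (fun p => ¬ p < 100),
      Real.log p / (p * ((p : ℝ) ^ 2 - 1)) ≤ 0.046 * (1 / 99) := by
    have step1 : ∑ p ∈ N.primeFactors.filter (fun p => ¬ p < 100),
        Real.log p / (p * ((p : ℝ) ^ 2 - 1))
        ≤ ∑ p ∈ N.primeFactors.filter (fun p => ¬ p < 100),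
            (0.046 : ℝ) * (1 / ((p : ℝ) - 1) - 1 / p) := by
      apply Finset.sum_le_sum
      intro p hp
      rw [Finset.mem_filter] at hp
      exact aux_tail_term_bound (by omega)
    refine le_trans step1 ?_
    rw [← Finset.mul_sum]
    apply mul_le_mul_of_nonneg_left _ (by norm_num)
    apply aux_telescope N
    intro n hn
    rw [Finset.mem_filter] at hn
    exact ⟨by omega, Nat.le_of_dvd (by omega) (Nat.dvd_of_mem_primeFactors hn.1)⟩
  have : (0.18537 : ℝ) + 0.046 * (1 / 99) < 0.186 := by norm_num
  linarith


end
end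

section
/- For every positive integer N, the cardinality of C_N equals ψ(N); that is, the number of integer matrices [[a,b],[0,d]] with ad = N, a ≥ 1, 0 ≤ b ≤ d−1 and gcd(a,b,d) = 1 is N ∏_{p | N} (1 + 1/p). -/
open Complex Finset

noncomputable section

lemma count_coprime_range (g m : ℕ) :
    ((Finset.range (g * m)).filter (fun b => Nat.Coprime g b)).card = m * g.totient := by
  induction m with
  | zero => simp
  | succ m ih =>
    rw [Nat.mul_succ, Finset.range_eq_Ico,
      ← Finset.Ico_union_Ico_eq_Ico (Nat.zero_le (g * m)) (Nat.le_add_right _ _),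
      Finset.filter_union,
      Finset.card_union_of_disjoint
        (Finset.disjoint_filter_filter (Finset.Ico_disjoint_Ico_consecutive 0 (g*m) (g*m+g))),
      ← Finset.range_eq_Ico, ih, Nat.filter_coprime_Ico_eq_totient g (g*m)]
    ring

lemma count_coprime (g d : ℕ) (hg : g ∣ d) :
    ((Finset.range d).filter (fun b => Nat.Coprime g b)).card = (d / g) * g.totient := by
  obtain ⟨m, rfl⟩ := hg
  rcases Nat.eq_zero_or_pos g with rfl | hgpos
  · simp
  · rw [count_coprime_range, Nat.mul_div_cancel_left _ hgpos]

lemma gcd_pow_pow (p a b : ℕ) : Nat.gcd (p ^ a) (p ^ b) = p ^ min a b := by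
  rcases le_total a b with h | h
  · rw [Nat.gcd_eq_left (pow_dvd_pow p h), min_eq_left h]
  · rw [Nat.gcd_eq_right (pow_dvd_pow p h), min_eq_right h]

open Finset

def hfun (a d : ℕ) : ℕ := (d / Nat.gcd a d) * (Nat.gcd a d).totient

def Fn (n : ℕ) : ℕ := ∑ x ∈ n.divisorsAntidiagonal, hfun x.1 x.2

lemma cnt_eq (a d : ℕ) :
    ((Finset.range d).filter (fun b => Nat.gcd a (Nat.gcd b d) = 1)).card = hfun a d := by
  have hpred : ∀ b ∈ Finset.range d,
      (Nat.gcd a (Nat.gcd b d) = 1) = ((Nat.gcd a d).Coprime b) := by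
    intro b _
    have : Nat.gcd a (Nat.gcd b d) = Nat.gcd (Nat.gcd a d) b := by
      rw [Nat.gcd_comm b d, ← Nat.gcd_assoc]
    rw [this]
  rw [Finset.filter_congr (fun b hb => iff_of_eq (hpred b hb))]
  exact count_coprime _ _ (Nat.gcd_dvd_right a d)

lemma hfun_mul {a1 a2 b1 b2 : ℕ} (cop : Nat.Coprime (a1 * a2) (b1 * b2)) :
    hfun (a1 * b1) (a2 * b2) = hfun a1 a2 * hfun b1 b2 := by
  have key : ∀ {x y : ℕ}, x ∣ a1 * a2 → y ∣ b1 * b2 → Nat.Coprime x y :=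
    fun hx hy => (Nat.Coprime.coprime_dvd_left hx cop).coprime_dvd_right hy
  have ca2b2 : Nat.Coprime a2 b2 := key (dvd_mul_left a2 a1) (dvd_mul_left b2 b1)
  have cb1a2 : Nat.Coprime b1 a2 := (key (dvd_mul_left a2 a1) (dvd_mul_right b1 b2)).symm
  have ca1b2 : Nat.Coprime a1 b2 := key (dvd_mul_right a1 a2) (dvd_mul_left b2 b1)
  have hg : Nat.gcd (a1 * b1) (a2 * b2) = Nat.gcd a1 a2 * Nat.gcd b1 b2 := by
    rw [Nat.Coprime.gcd_mul (a1 * b1) ca2b2,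
      Nat.Coprime.gcd_mul_right_cancel a1 cb1a2,
      Nat.Coprime.gcd_mul_left_cancel b1 ca1b2]
  have cg : Nat.Coprime (Nat.gcd a1 a2) (Nat.gcd b1 b2) :=
    key (dvd_trans (Nat.gcd_dvd_left _ _) (dvd_mul_right _ _))
      (dvd_trans (Nat.gcd_dvd_left _ _) (dvd_mul_right _ _))
  unfold hfun
  rw [hg, ← Nat.div_mul_div_comm (Nat.gcd_dvd_right a1 a2) (Nat.gcd_dvd_right b1 b2),
    Nat.totient_mul cg]
  ring
lemma Fn_one : Fn 1 = 1 := by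
  simp [Fn, Nat.divisorsAntidiagonal_one, hfun]

lemma Fn_mult {m n : ℕ} (cop : Nat.Coprime m n) : Fn (m * n) = Fn m * Fn n := by
  unfold Fn
  rw [Finset.sum_mul_sum, ← Finset.sum_product']
  symm
  apply Finset.sum_nbij fun (x : (ℕ × ℕ) × ℕ × ℕ) => (x.1.1 * x.2.1, x.1.2 * x.2.2)
  · rintro ⟨⟨a1, a2⟩, ⟨b1, b2⟩⟩ h
    simp only [Finset.mem_product, Nat.mem_divisorsAntidiagonal, Ne] at h
    rcases h with ⟨⟨rfl, ha⟩, ⟨rfl, hb⟩⟩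
    simp only [Nat.mem_divisorsAntidiagonal, Nat.mul_eq_zero, Ne]
    constructor
    · ring
    rw [Nat.mul_eq_zero] at *
    exact not_or_intro ha hb
  · simp only [Set.InjOn, Finset.mem_coe, Nat.mem_divisorsAntidiagonal, Ne,
      Finset.mem_product, Prod.mk.injEq]
    rintro ⟨⟨a1, a2⟩, ⟨b1, b2⟩⟩ ⟨⟨rfl, ha⟩, ⟨rfl, hb⟩⟩ ⟨⟨c1, c2⟩, ⟨d1, d2⟩⟩ hcd h
    simp only [Prod.mk.injEq] at h
    ext <;> dsimp only
    · trans Nat.gcd (a1 * a2) (a1 * b1)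
      · rw [Nat.gcd_mul_left, cop.coprime_mul_left.coprime_mul_right_right.gcd_eq_one, mul_one]
      · rw [← hcd.1.1, ← hcd.2.1] at cop
        rw [← hcd.1.1, h.1, Nat.gcd_mul_left,
          cop.coprime_mul_left.coprime_mul_right_right.gcd_eq_one, mul_one]
    · trans Nat.gcd (a1 * a2) (a2 * b2)
      · rw [mul_comm, Nat.gcd_mul_left, cop.coprime_mul_right.coprime_mul_left_right.gcd_eq_one,
          mul_one]
      · rw [← hcd.1.1, ← hcd.2.1] at cop
        rw [← hcd.1.1, h.2, mul_comm, Nat.gcd_mul_left,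
          cop.coprime_mul_right.coprime_mul_left_right.gcd_eq_one, mul_one]
    · trans Nat.gcd (b1 * b2) (a1 * b1)
      · rw [mul_comm, Nat.gcd_mul_right,
          cop.coprime_mul_right.coprime_mul_left_right.symm.gcd_eq_one, one_mul]
      · rw [← hcd.1.1, ← hcd.2.1] at cop
        rw [← hcd.2.1, h.1, mul_comm c1 d1, Nat.gcd_mul_left,
          cop.coprime_mul_right.coprime_mul_left_right.symm.gcd_eq_one, mul_one]
    · trans Nat.gcd (b1 * b2) (a2 * b2)
      · rw [Nat.gcd_mul_right, cop.coprime_mul_left.coprime_mul_right_right.symm.gcd_eq_one,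
          one_mul]
      · rw [← hcd.1.1, ← hcd.2.1] at cop
        rw [← hcd.2.1, h.2, Nat.gcd_mul_right,
          cop.coprime_mul_left.coprime_mul_right_right.symm.gcd_eq_one, one_mul]
  · simp only [Set.SurjOn, Set.subset_def, Finset.mem_coe, Nat.mem_divisorsAntidiagonal, Ne,
      Finset.mem_product, Set.mem_image, exists_prop, Prod.mk.injEq]
    rintro ⟨b1, b2⟩ h
    dsimp at h
    use ((b1.gcd m, b2.gcd m), (b1.gcd n, b2.gcd n))
    rw [← cop.gcd_mul _, ← cop.gcd_mul _, ← h.1, Nat.gcd_mul_gcd_of_coprime_of_mul_eq_mul cop h.1,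
      Nat.gcd_mul_gcd_of_coprime_of_mul_eq_mul cop.symm _]
    · rw [Nat.mul_eq_zero, not_or] at h
      simp [h.2.1, h.2.2]
    rw [mul_comm n m, h.1]
  · simp only [Nat.mem_divisorsAntidiagonal, Ne, Finset.mem_product]
    rintro ⟨⟨a1, a2⟩, ⟨b1, b2⟩⟩ ⟨⟨rfl, ha⟩, ⟨rfl, hb⟩⟩
    exact (hfun_mul cop).symm
lemma Fn_prime_pow {p k : ℕ} (hp : p.Prime) (hk : 1 ≤ k) :
    (Fn (p ^ k) : ℝ) = (p : ℝ) ^ k + (p : ℝ) ^ (k - 1) := by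
  have h1 : Fn (p ^ k) = ∑ i ∈ Finset.range (k + 1), hfun (p ^ k / p ^ i) (p ^ i) := by
    rw [Fn, Nat.sum_divisorsAntidiagonal' (f := fun a d => hfun a d),
      Nat.sum_divisors_prime_pow hp]
  have hterm : ∀ i ∈ Finset.range (k + 1), ((hfun (p ^ k / p ^ i) (p ^ i) : ℕ) : ℝ) =
      if i = 0 then 1 else if i = k then (p : ℝ) ^ k
        else (p : ℝ) ^ (i - 1) * ((p : ℝ) - 1) := by
    intro i hi
    rw [Finset.mem_range] at hi
    have hik : i ≤ k := by omega
    rcases eq_or_ne i 0 with rfl | hi0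
    · simp [hfun]
    rcases eq_or_ne i k with rfl | hik'
    · have hds : p ^ i / p ^ i = 1 := Nat.div_self (Nat.pow_pos hp.pos)
      rw [hds, hfun, Nat.gcd_one_left, Nat.div_one, Nat.totient_one, mul_one,
        if_neg hi0, if_pos rfl]
      push_cast
      ring
    · have hm1 : 1 ≤ min (k - i) i := by omega
      have hmi : min (k - i) i ≤ i := min_le_right _ _
      rw [Nat.pow_div hik hp.pos, hfun, gcd_pow_pow,
        Nat.pow_div hmi hp.pos, Nat.totient_prime_pow hp (by omega)]
      rw [if_neg hi0, if_neg hik']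
      push_cast [Nat.cast_sub hp.one_lt.le]
      rw [← mul_assoc, ← pow_add, show i - min (k - i) i + (min (k - i) i - 1) = i - 1 by omega]
  obtain ⟨l, rfl⟩ : ∃ l, k = l + 1 := ⟨k - 1, by omega⟩
  rw [h1, Nat.cast_sum, Finset.sum_congr rfl hterm, Finset.sum_range_succ,
    Finset.sum_range_succ']
  have h2 : ∀ j ∈ Finset.range l, (if j + 1 = 0 then (1:ℝ) else if j + 1 = l + 1 then
      (p : ℝ) ^ (l + 1) else (p : ℝ) ^ (j + 1 - 1) * ((p : ℝ) - 1)) =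
      (p : ℝ) ^ j * ((p : ℝ) - 1) := by
    intro j hj
    rw [Finset.mem_range] at hj
    rw [if_neg (by omega), if_neg (by omega)]
    norm_num
  rw [Finset.sum_congr rfl h2, if_pos rfl, if_neg (by omega), if_pos rfl, ← Finset.sum_mul,
    geom_sum_mul]
  simp only [Nat.add_sub_cancel]
  ring

lemma card_CN (N : ℕ) (hN : 1 ≤ N) : (CN N).card = Fn N := by
  have hrepr : CN N = (N.divisorsAntidiagonal).biUnion
      (fun x => ((Finset.range x.2).filter
        (fun b => Nat.gcd x.1 (Nat.gcd b x.2) = 1)).image (fun b => (x.1, b, x.2))) := by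
    ext ⟨a, b, d⟩
    simp only [CN, Finset.mem_filter, Finset.mem_product, Finset.mem_range,
      Finset.mem_biUnion, Nat.mem_divisorsAntidiagonal, Finset.mem_image, Prod.mk.injEq,
      Prod.exists]
    constructor
    · rintro ⟨⟨-, -, -⟩, had, ha, hbd, hg⟩
      exact ⟨a, d, ⟨had, by omega⟩, b, ⟨hbd, hg⟩, rfl, rfl, rfl⟩
    · rintro ⟨a', d', ⟨had, hN0⟩, b', hb', rfl, rfl, rfl⟩
      have ha' : 1 ≤ a' := by
        rcases Nat.eq_zero_or_pos a' with rfl | h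
        · simp at had; omega
        · exact h
      have hha : a' ≤ N := Nat.le_of_dvd (by omega) ⟨d', had.symm⟩
      have hhd : d' ≤ N := Nat.le_of_dvd (by omega) ⟨a', by rw [← had]; ring⟩
      exact ⟨⟨by omega, by omega, by omega⟩, had, ha', hb'.1, hb'.2⟩
  have hdisj : ∀ x ∈ N.divisorsAntidiagonal, ∀ y ∈ N.divisorsAntidiagonal, x ≠ y →
      Disjoint (((Finset.range x.2).filter
          (fun b => Nat.gcd x.1 (Nat.gcd b x.2) = 1)).image (fun b => (x.1, b, x.2)))
        (((Finset.range y.2).filter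
          (fun b => Nat.gcd y.1 (Nat.gcd b y.2) = 1)).image (fun b => (y.1, b, y.2))) := by
    intro x _ y _ hxy
    refine Finset.disjoint_left.mpr ?_
    rintro ⟨a, b, d⟩ hxm hym
    simp only [Finset.mem_image, Prod.mk.injEq] at hxm hym
    obtain ⟨b1, -, h11, -, h13⟩ := hxm
    obtain ⟨b2, -, h21, -, h23⟩ := hym
    exact absurd (Prod.ext (h11.trans h21.symm) (h13.trans h23.symm)) hxy
  rw [hrepr, Finset.card_biUnion hdisj, Fn]
  refine Finset.sum_congr rfl fun x hx => ?_
  rw [Finset.card_image_of_injective _ (fun b1 b2 h => by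
    simpa using congrArg (fun t : ℕ × ℕ × ℕ => t.2.1) h)]
  exact cnt_eq x.1 x.2

theorem card_CN_eq_psi_aux (N : ℕ) (hN : 1 ≤ N) :
    ((CN N).card : ℝ) = (N : ℝ) * ∏ p ∈ N.primeFactors, (1 + 1 / (p : ℝ)) := by
  have hN0 : N ≠ 0 := by omega
  rw [card_CN N hN]
  have hfac : Fn N = ∏ p ∈ N.primeFactors, Fn (p ^ N.factorization p) := by
    rw [Nat.multiplicative_factorization Fn (fun x y h => Fn_mult h) Fn_one hN0,
      Nat.prod_factorization_eq_prod_primeFactors]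
  have hNprod : (N : ℝ) = ∏ p ∈ N.primeFactors, (p : ℝ) ^ N.factorization p := by
    conv_lhs => rw [← Nat.factorization_prod_pow_eq_self hN0]
    rw [Nat.prod_factorization_eq_prod_primeFactors]
    push_cast
    rfl
  rw [hfac, Nat.cast_prod, hNprod, ← Finset.prod_mul_distrib]
  refine Finset.prod_congr rfl fun p hp => ?_
  have hpp : p.Prime := Nat.prime_of_mem_primeFactors hp
  have hk : 1 ≤ N.factorization p :=
    (Nat.Prime.factorization_pos_of_dvd hpp hN0 (Nat.dvd_of_mem_primeFactors hp))
  have hp0 : (p : ℝ) ≠ 0 := Nat.cast_ne_zero.mpr hpp.pos.ne'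
  rw [Fn_prime_pow hpp hk]
  have hps : (p : ℝ) ^ N.factorization p = (p : ℝ) ^ (N.factorization p - 1) * p := by
    rw [← pow_succ]
    congr 1
    omega
  rw [hps]
  field_simp

/-- For every positive integer `N`, `#C_N = ψ(N)`. -/
theorem card_CN_eq_psi (N : ℕ) (hN : 1 ≤ N) :
    ((CN N).card : ℝ) = psi N := by
  rw [psi]
  exact card_CN_eq_psi_aux N hN

end
end

section
/- For every positive integer N and every τ in the complex upper half-plane, −∑_{γ ∈ C_N} log Im(τ_γ) = ψ(N)(log N − 2λ_N − log Im(τ)). -/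
open Complex Finset

noncomputable section

namespace NegSumAux

open Finset

lemma count_coprime_mul (g k : ℕ) :
    #((range (g * k)).filter fun b => Nat.gcd g b = 1) = k * g.totient := by
  induction k with
  | zero => simp
  | succ k ih =>
    have : range (g * (k+1)) = range (g*k) ∪ Ico (g*k) (g*k + g) := by
      rw [range_eq_Ico, range_eq_Ico, Finset.Ico_union_Ico_eq_Ico (Nat.zero_le _) (Nat.le_add_right _ _),
        mul_add, mul_one]
    rw [this, filter_union, card_union_of_disjoint, ih]
    · have := Nat.filter_coprime_Ico_eq_totient g (g*k)
      rw [show ((Ico (g*k) (g*k+g)).filter fun b => Nat.gcd g b = 1)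
          = ((Ico (g*k) (g*k+g)).filter (g.Coprime ·)) from rfl, this]
      ring
    · exact disjoint_filter_filter (by
        rw [range_eq_Ico]
        exact Finset.Ico_disjoint_Ico_consecutive 0 (g*k) (g*k+g))

lemma count_coprime (g d : ℕ) (hg : 0 < g) (hgd : g ∣ d) :
    #((range d).filter fun b => Nat.gcd g b = 1) = (d / g) * g.totient := by
  obtain ⟨k, rfl⟩ := hgd
  rw [count_coprime_mul, Nat.mul_div_cancel_left _ hg]

lemma gcd_rot (a b d : ℕ) : Nat.gcd (Nat.gcd a d) b = Nat.gcd a (Nat.gcd b d) := by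
  rw [Nat.gcd_comm b d, Nat.gcd_assoc]

/-- The number of `b` attached to a divisor `a` of `N` in `C_N`. -/
def trm (N a : ℕ) : ℕ := (N / a / Nat.gcd a (N / a)) * (Nat.gcd a (N / a)).totient

lemma mem_CN {N : ℕ} (hN : N ≠ 0) {g : ℕ × ℕ × ℕ} :
    g ∈ CN N ↔ g.1 * g.2.2 = N ∧ 1 ≤ g.1 ∧ g.2.1 < g.2.2 ∧
      Nat.gcd g.1 (Nat.gcd g.2.1 g.2.2) = 1 := by
  constructor
  · intro h; exact (Finset.mem_filter.mp h).2
  · intro h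
    refine Finset.mem_filter.mpr ⟨?_, h⟩
    obtain ⟨h1, h2, h3, h4⟩ := h
    have hd : g.2.2 ≤ N := by
      refine Nat.le_of_dvd (Nat.pos_of_ne_zero hN) ⟨g.1, by linarith [h1, mul_comm g.1 g.2.2]⟩
    have ha : g.1 ≤ N := Nat.le_of_dvd (Nat.pos_of_ne_zero hN) ⟨g.2.2, h1.symm⟩
    have hb : g.2.1 ≤ N := le_trans (Nat.le_of_lt_succ (Nat.lt_succ_of_lt h3)) hd
    simp only [Finset.mem_product, Finset.mem_range]
    exact ⟨Nat.lt_succ_of_le ha, Nat.lt_succ_of_le hb, Nat.lt_succ_of_le hd⟩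

lemma sum_CN (N : ℕ) (hN : N ≠ 0) (w : ℕ → ℝ) :
    ∑ g ∈ CN N, w g.1 = ∑ a ∈ N.divisors, (trm N a : ℝ) * w a := by
  have key : ∀ a ∈ N.divisors,
      (trm N a : ℝ) * w a
        = ∑ b ∈ (range (N/a)).filter (fun b => Nat.gcd (Nat.gcd a (N/a)) b = 1), w a := by
    intro a ha
    rw [Finset.sum_const, nsmul_eq_mul]
    congr 2
    obtain ⟨hdvd, -⟩ := Nat.mem_divisors.mp ha
    have hapos : 0 < a := Nat.pos_of_mem_divisors ha
    have hg : 0 < Nat.gcd a (N/a) := Nat.gcd_pos_of_pos_left _ hapos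
    rw [count_coprime _ _ hg (Nat.gcd_dvd_right _ _)]
    rfl
  rw [Finset.sum_congr rfl key,
    ← Finset.sum_sigma N.divisors
      (fun a => (range (N/a)).filter (fun b => Nat.gcd (Nat.gcd a (N/a)) b = 1))
      (fun x => w x.1)]
  apply Finset.sum_nbij' (i := fun g => (⟨g.1, g.2.1⟩ : Σ _ : ℕ, ℕ))
    (j := fun x => (x.1, x.2, N / x.1))
  · intro g hg
    obtain ⟨h1, h2, h3, h4⟩ := (mem_CN hN).mp hg
    have hda : N / g.1 = g.2.2 := by
      rw [← h1, Nat.mul_div_cancel_left _ h2]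
    refine Finset.mem_sigma.mpr ⟨Nat.mem_divisors.mpr ⟨⟨g.2.2, h1.symm⟩, hN⟩, ?_⟩
    rw [Finset.mem_filter, Finset.mem_range, hda]
    refine ⟨h3, ?_⟩
    show Nat.gcd (Nat.gcd g.1 g.2.2) g.2.1 = 1
    rw [gcd_rot]; exact h4
  · intro x hx
    obtain ⟨hx1, hx2⟩ := Finset.mem_sigma.mp hx
    rw [Finset.mem_filter, Finset.mem_range] at hx2
    refine (mem_CN hN).mpr ⟨Nat.mul_div_cancel' (Nat.mem_divisors.mp hx1).1,
      Nat.pos_of_mem_divisors hx1, hx2.1, ?_⟩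
    show Nat.gcd x.1 (Nat.gcd x.2 (N / x.1)) = 1
    rw [← gcd_rot]; exact hx2.2
  · intro g hg
    obtain ⟨h1, h2, -, -⟩ := (mem_CN hN).mp hg
    have hda : N / g.1 = g.2.2 := by rw [← h1, Nat.mul_div_cancel_left _ h2]
    simp [hda]
  · intro x hx; rfl
  · intro g hg
    obtain ⟨h1, h2, -, -⟩ := (mem_CN hN).mp hg
    have hda : N / g.1 = g.2.2 := by rw [← h1, Nat.mul_div_cancel_left _ h2]
    simp [hda]

lemma sum_divisors_coprime_mul {β : Type*} [AddCommMonoid β] {m n : ℕ}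
    (h : Nat.Coprime m n) (hm : m ≠ 0) (hn : n ≠ 0) (f : ℕ → β) :
    ∑ d ∈ (m * n).divisors, f d = ∑ a ∈ m.divisors, ∑ b ∈ n.divisors, f (a * b) := by
  rw [← Finset.sum_product']
  apply Finset.sum_nbij' (i := fun d => (Nat.gcd d m, Nat.gcd d n)) (j := fun x => x.1 * x.2)
  · intro d hd
    obtain ⟨hdvd, -⟩ := Nat.mem_divisors.mp hd
    exact Finset.mem_product.mpr ⟨Nat.mem_divisors.mpr ⟨Nat.gcd_dvd_right _ _, hm⟩,
      Nat.mem_divisors.mpr ⟨Nat.gcd_dvd_right _ _, hn⟩⟩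
  · intro x hx
    obtain ⟨hx1, hx2⟩ := Finset.mem_product.mp hx
    exact Nat.mem_divisors.mpr ⟨Nat.mul_dvd_mul (Nat.mem_divisors.mp hx1).1
      (Nat.mem_divisors.mp hx2).1, mul_ne_zero hm hn⟩
  · intro d hd
    exact (Nat.gcd_mul_gcd_eq_iff_dvd_mul_of_coprime h).mpr (Nat.mem_divisors.mp hd).1
  · intro x hx
    obtain ⟨hx1, hx2⟩ := Finset.mem_product.mp hx
    have ha := (Nat.mem_divisors.mp hx1).1
    have hb := (Nat.mem_divisors.mp hx2).1
    have hbm : Nat.Coprime x.2 m := Nat.Coprime.coprime_dvd_left hb h.symm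
    have han : Nat.Coprime x.1 n := Nat.Coprime.coprime_dvd_left ha h
    have e1 : Nat.gcd (x.1 * x.2) m = x.1 := by
      rw [mul_comm, Nat.Coprime.gcd_mul_left_cancel _ hbm, Nat.gcd_eq_left ha]
    have e2 : Nat.gcd (x.1 * x.2) n = x.2 := by
      rw [Nat.Coprime.gcd_mul_left_cancel _ han, Nat.gcd_eq_left hb]
    simp [e1, e2]
  · intro d hd
    rw [(Nat.gcd_mul_gcd_eq_iff_dvd_mul_of_coprime h).mpr (Nat.mem_divisors.mp hd).1]

lemma coprime_gcd_mul {x y : ℕ} (hxy : Nat.Coprime x y) (z : ℕ) :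
    Nat.gcd (x * y) z = Nat.gcd x z * Nat.gcd y z := by
  apply Nat.dvd_antisymm
  · set g := Nat.gcd (x * y) z with hgdef
    have hdxy : g ∣ x * y := Nat.gcd_dvd_left _ _
    have hdz : g ∣ z := Nat.gcd_dvd_right _ _
    have key : Nat.gcd g x * Nat.gcd g y = g :=
      (Nat.gcd_mul_gcd_eq_iff_dvd_mul_of_coprime hxy).mpr hdxy
    rw [← key]
    exact Nat.mul_dvd_mul
      (Nat.dvd_gcd (Nat.gcd_dvd_right _ _) (dvd_trans (Nat.gcd_dvd_left _ _) hdz))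
      (Nat.dvd_gcd (Nat.gcd_dvd_right _ _) (dvd_trans (Nat.gcd_dvd_left _ _) hdz))
  · have hc : Nat.Coprime (Nat.gcd x z) (Nat.gcd y z) :=
      Nat.Coprime.coprime_dvd_left (Nat.gcd_dvd_left _ _)
        (Nat.Coprime.coprime_dvd_right (Nat.gcd_dvd_left _ _) hxy)
    exact Nat.dvd_gcd (Nat.mul_dvd_mul (Nat.gcd_dvd_left _ _) (Nat.gcd_dvd_left _ _))
      (Nat.Coprime.mul_dvd_of_dvd_of_dvd hc (Nat.gcd_dvd_right _ _) (Nat.gcd_dvd_right _ _))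

lemma trm_mul {m n a b : ℕ} (h : Nat.Coprime m n) (hm : m ≠ 0) (hn : n ≠ 0)
    (ha : a ∣ m) (hb : b ∣ n) : trm (m * n) (a * b) = trm m a * trm n b := by
  have ha0 : a ≠ 0 := fun h0 => hm (Nat.eq_zero_of_zero_dvd (h0 ▸ ha))
  have hb0 : b ≠ 0 := fun h0 => hn (Nat.eq_zero_of_zero_dvd (h0 ▸ hb))
  have hq : m * n / (a * b) = (m / a) * (n / b) := by
    rw [Nat.div_mul_div_comm ha hb]
  have hma : m / a ∣ m := Nat.div_dvd_of_dvd ha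
  have hnb : n / b ∣ n := Nat.div_dvd_of_dvd hb
  have c1 : Nat.Coprime (m / a) (n / b) := Nat.Coprime.coprime_dvd_left hma
    (Nat.Coprime.coprime_dvd_right hnb h)
  have cab_mn : Nat.Coprime b (m / a) := Nat.Coprime.coprime_dvd_left hb
    (Nat.Coprime.coprime_dvd_right hma h.symm)
  have cab_nb : Nat.Coprime a (n / b) := Nat.Coprime.coprime_dvd_left ha
    (Nat.Coprime.coprime_dvd_right hnb h)
  have hab : Nat.Coprime a b := Nat.Coprime.coprime_dvd_left ha
    (Nat.Coprime.coprime_dvd_right hb h)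
  have hg : Nat.gcd (a * b) (m / a * (n / b)) = Nat.gcd a (m / a) * Nat.gcd b (n / b) := by
    rw [coprime_gcd_mul hab, Nat.Coprime.gcd_mul_right_cancel_right _ cab_nb.symm,
      Nat.Coprime.gcd_mul_left_cancel_right _ cab_mn.symm]
  have g1m : Nat.gcd a (m / a) ∣ m := dvd_trans (Nat.gcd_dvd_left _ _) ha
  have g2n : Nat.gcd b (n / b) ∣ n := dvd_trans (Nat.gcd_dvd_left _ _) hb
  have hgc : Nat.Coprime (Nat.gcd a (m / a)) (Nat.gcd b (n / b)) :=
    Nat.Coprime.coprime_dvd_left g1m (Nat.Coprime.coprime_dvd_right g2n h)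
  unfold trm
  rw [hq, hg, Nat.totient_mul hgc,
    ← Nat.div_mul_div_comm (Nat.gcd_dvd_right a (m/a)) (Nat.gcd_dvd_right b (n/b))]
  ring

lemma gcd_pow_pow (p i j : ℕ) : Nat.gcd (p ^ i) (p ^ j) = p ^ min i j := by
  rcases le_total i j with h | h
  · rw [min_eq_left h, Nat.gcd_eq_left (pow_dvd_pow p h)]
  · rw [min_eq_right h, Nat.gcd_eq_right (pow_dvd_pow p h)]

lemma trm_pp_zero (p k : ℕ) : trm (p ^ k) 1 = p ^ k := by
  unfold trm
  simp [Nat.gcd_one_left]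

lemma trm_pp_top (p k : ℕ) (hp : p.Prime) : trm (p ^ k) (p ^ k) = 1 := by
  unfold trm
  rw [Nat.div_self (pow_pos hp.pos k)]
  simp

lemma trm_pp_mid (p k i : ℕ) (hp : p.Prime) (h1 : 1 ≤ i) (h2 : i < k) :
    trm (p ^ k) (p ^ i) = p ^ (k - i - 1) * (p - 1) := by
  unfold trm
  have hdiv : p ^ k / p ^ i = p ^ (k - i) := Nat.pow_div (le_of_lt h2) hp.pos
  rw [hdiv, gcd_pow_pow]
  set m := min i (k - i) with hm
  have hm1 : 1 ≤ m := le_min h1 (by omega)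
  have hmle : m ≤ k - i := min_le_right _ _
  rw [Nat.pow_div hmle hp.pos, Nat.totient_prime_pow hp hm1]
  rw [← mul_assoc, ← pow_add]
  congr 2
  omega

/-- total count attached to divisors of `N`. -/
def FF (N : ℕ) : ℕ := ∑ a ∈ N.divisors, trm N a
/-- `p`-adic-valuation-weighted count. -/
def GG (p N : ℕ) : ℕ := ∑ a ∈ N.divisors, trm N a * (a.factorization p)

lemma geom_nat (p m : ℕ) (hp : 1 ≤ p) :
    (∑ i ∈ range m, p ^ i) * (p - 1) = p ^ m - 1 := by
  induction m with
  | zero => simp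
  | succ m ih =>
    rw [sum_range_succ, add_mul, ih]
    have h1 : 1 ≤ p ^ m := Nat.one_le_pow _ _ hp
    have h3 : p ^ m ≤ p ^ (m+1) := Nat.pow_le_pow_right hp (by omega)
    have h4 : p ^ m * (p-1) = p ^ (m+1) - p ^ m := by
      rw [Nat.mul_sub, mul_one, ← pow_succ]
    omega

lemma FF_pp (p k : ℕ) (hp : p.Prime) (hk : 1 ≤ k) : FF (p ^ k) = p ^ k + p ^ (k - 1) := by
  obtain ⟨m, rfl⟩ : ∃ m, k = m + 1 := ⟨k - 1, by omega⟩
  unfold FF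
  rw [Nat.sum_divisors_prime_pow hp, Finset.sum_range_succ, Finset.sum_range_succ']
  have hmid : ∀ i ∈ range m, trm (p ^ (m+1)) (p ^ (i+1)) = p ^ (m - 1 - i) * (p - 1) := by
    intro i hi
    rw [Finset.mem_range] at hi
    have he : m + 1 - (i+1) - 1 = m - 1 - i := by omega
    rw [trm_pp_mid p (m+1) (i+1) hp (by omega) (by omega), he]
  rw [Finset.sum_congr rfl hmid]
  have hrefl : ∑ i ∈ range m, p ^ (m - 1 - i) * (p - 1)
      = ∑ i ∈ range m, p ^ i * (p - 1) :=
    Finset.sum_range_reflect (fun j => p ^ j * (p - 1)) m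
  rw [hrefl, ← Finset.sum_mul, geom_nat p m hp.one_lt.le, pow_zero, trm_pp_zero p (m+1),
    trm_pp_top p (m+1) hp]
  have h1 : 1 ≤ p ^ m := Nat.one_le_pow _ _ hp.pos
  simp only [Nat.add_sub_cancel]
  omega

lemma SS_aux (p : ℕ) (hp : 1 ≤ p) :
    ∀ m, (∑ i ∈ range m, (m - i) * (p ^ i * (p - 1))) + (m + 1) = ∑ i ∈ range (m+1), p ^ i := by
  intro m
  induction m with
  | zero => simp
  | succ m ih =>
    have step : ∑ i ∈ range (m+1), (m + 1 - i) * (p ^ i * (p - 1))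
        = (∑ i ∈ range (m+1), (m - i) * (p ^ i * (p - 1)))
          + ∑ i ∈ range (m+1), p ^ i * (p - 1) := by
      rw [← Finset.sum_add_distrib]
      apply Finset.sum_congr rfl
      intro i hi
      rw [Finset.mem_range] at hi
      have h5 : m + 1 - i = (m - i) + 1 := by omega
      rw [h5, add_mul, one_mul]
    have hgeom : (∑ i ∈ range (m+1), p ^ i * (p - 1)) = p ^ (m+1) - 1 := by
      rw [← Finset.sum_mul, geom_nat p (m+1) hp]
    have hlast : ∑ i ∈ range (m+1), (m - i) * (p ^ i * (p - 1))
        = ∑ i ∈ range m, (m - i) * (p ^ i * (p - 1)) := by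
      rw [Finset.sum_range_succ]
      simp
    have h1 : 1 ≤ p ^ (m+1) := Nat.one_le_pow _ _ hp
    have hrs : ∑ i ∈ range (m+1+1), p ^ i = (∑ i ∈ range (m+1), p ^ i) + p ^ (m+1) :=
      Finset.sum_range_succ _ _
    omega

lemma GG_pp (p n : ℕ) (hp : p.Prime) : GG p (p ^ n) = ∑ i ∈ range n, p ^ i := by
  unfold GG
  rw [Nat.sum_divisors_prime_pow hp]
  have hfact : ∀ i : ℕ, (p ^ i).factorization p = i := by
    intro i
    rw [Nat.Prime.factorization_pow hp, Finsupp.single_eq_same]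
  cases n with
  | zero => simp [hfact]
  | succ m =>
    rw [Finset.sum_range_succ, Finset.sum_range_succ']
    have hmid : ∀ i ∈ range m, trm (p ^ (m+1)) (p ^ (i+1)) * ((p ^ (i+1)).factorization p)
        = (i + 1) * (p ^ (m - 1 - i) * (p - 1)) := by
      intro i hi
      rw [Finset.mem_range] at hi
      have he : m + 1 - (i+1) - 1 = m - 1 - i := by omega
      rw [hfact, trm_pp_mid p (m+1) (i+1) hp (by omega) (by omega), he]
      ring
    rw [Finset.sum_congr rfl hmid]
    have hrefl : ∑ i ∈ range m, (i + 1) * (p ^ (m - 1 - i) * (p - 1))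
        = ∑ i ∈ range m, (m - i) * (p ^ i * (p - 1)) := by
      rw [← Finset.sum_range_reflect (fun j => (m - j) * (p ^ j * (p - 1))) m]
      apply Finset.sum_congr rfl
      intro i hi
      rw [Finset.mem_range] at hi
      congr 1
      omega
    rw [hrefl, hfact, trm_pp_top p (m+1) hp, pow_zero, hfact, trm_pp_zero p (m+1)]
    have := SS_aux p hp.pos m
    omega

lemma FF_mul {m n : ℕ} (h : Nat.Coprime m n) (hm : m ≠ 0) (hn : n ≠ 0) :
    FF (m * n) = FF m * FF n := by
  unfold FF
  rw [sum_divisors_coprime_mul h hm hn, Finset.sum_mul_sum]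
  apply Finset.sum_congr rfl
  intro a ha
  apply Finset.sum_congr rfl
  intro b hb
  exact trm_mul h hm hn (Nat.mem_divisors.mp ha).1 (Nat.mem_divisors.mp hb).1

lemma psi_one : psi 1 = 1 := by simp [psi]

lemma psi_mul_pp (p n M : ℕ) (hp : p.Prime) (hn : 1 ≤ n) (hM : M ≠ 0) (hnd : ¬ p ∣ M) :
    psi (p ^ n * M) = ((p:ℝ) ^ n + (p:ℝ) ^ (n-1)) * psi M := by
  obtain ⟨m, rfl⟩ : ∃ m, n = m + 1 := ⟨n - 1, by omega⟩
  unfold psi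
  have hpn : (p:ℕ) ^ (m+1) ≠ 0 := pow_ne_zero _ hp.pos.ne'
  rw [Nat.primeFactors_mul hpn hM, Nat.primeFactors_prime_pow (by omega) hp]
  have hpM : p ∉ M.primeFactors := fun h => hnd (Nat.dvd_of_mem_primeFactors h)
  rw [show ({p} : Finset ℕ) ∪ M.primeFactors = insert p M.primeFactors by
    rw [Finset.insert_eq], Finset.prod_insert hpM]
  have hp0 : (p:ℝ) ≠ 0 := Nat.cast_ne_zero.mpr hp.pos.ne'
  push_cast
  field_simp
  ring

lemma FF_eq_psi : ∀ N : ℕ, N ≠ 0 → (FF N : ℝ) = psi N := by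
  intro N
  induction N using Nat.strong_induction_on with
  | _ N ih =>
    intro hN
    rcases eq_or_ne N 1 with rfl | hN1
    · rw [psi_one]
      norm_num [FF, trm]
    · have hp : N.minFac.Prime := Nat.minFac_prime hN1
      set p := N.minFac with hpdef
      have hpd : p ∣ N := Nat.minFac_dvd N
      set n := N.factorization p with hndef
      have hn : 1 ≤ n := hp.factorization_pos_of_dvd hN hpd
      have hsplit : p ^ n * (N / p ^ n) = N := Nat.ordProj_mul_ordCompl_eq_self N p
      set M := N / p ^ n with hMdef
      have hM : M ≠ 0 := (Nat.ordCompl_pos p hN).ne'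
      have hnd : ¬ p ∣ M := Nat.not_dvd_ordCompl hp hN
      have hcop : Nat.Coprime (p ^ n) M := (Nat.coprime_ordCompl hp hN).pow_left _
      have hMlt : M < N := Nat.div_lt_self (Nat.pos_of_ne_zero hN)
        (Nat.one_lt_pow (by omega) hp.one_lt)
      have hpn0 : (p:ℕ) ^ n ≠ 0 := pow_ne_zero _ hp.pos.ne'
      rw [← hsplit, FF_mul hcop hpn0 hM, FF_pp p n hp hn, psi_mul_pp p n M hp hn hM hnd,
        ← ih M hMlt hM]
      push_cast
      ring

lemma GG_split (p n M : ℕ) (hp : p.Prime) (hM : M ≠ 0) (hnd : ¬ p ∣ M) :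
    GG p (p ^ n * M) = GG p (p ^ n) * FF M := by
  have hcop : Nat.Coprime (p ^ n) M :=
    Nat.Coprime.pow_left _ ((Nat.Prime.coprime_iff_not_dvd hp).mpr hnd)
  have hpn0 : (p:ℕ) ^ n ≠ 0 := pow_ne_zero _ hp.pos.ne'
  unfold GG FF
  rw [sum_divisors_coprime_mul hcop hpn0 hM, Finset.sum_mul_sum]
  apply Finset.sum_congr rfl
  intro a ha
  apply Finset.sum_congr rfl
  intro b hb
  have haD := (Nat.mem_divisors.mp ha).1
  have hbD := (Nat.mem_divisors.mp hb).1
  have ha0 : a ≠ 0 := fun h0 => hpn0 (Nat.eq_zero_of_zero_dvd (h0 ▸ haD))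
  have hb0 : b ≠ 0 := fun h0 => hM (Nat.eq_zero_of_zero_dvd (h0 ▸ hbD))
  have hbf : b.factorization p = 0 :=
    Nat.factorization_eq_zero_of_not_dvd (fun hd => hnd (hd.trans hbD))
  rw [trm_mul hcop hpn0 hM haD hbD, Nat.factorization_mul ha0 hb0, Finsupp.add_apply, hbf]
  ring

lemma GG_eq (N p : ℕ) (hN : N ≠ 0) (hpmem : p ∈ N.primeFactors) :
    (GG p N : ℝ) = psi N *
      (((p : ℝ) ^ (N.factorization p) - 1) /
        ((p : ℝ) ^ (N.factorization p - 1) * ((p : ℝ) ^ 2 - 1))) := by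
  have hp : p.Prime := Nat.prime_of_mem_primeFactors hpmem
  have hpd : p ∣ N := Nat.dvd_of_mem_primeFactors hpmem
  set n := N.factorization p with hndef
  have hn : 1 ≤ n := hp.factorization_pos_of_dvd hN hpd
  obtain ⟨m, hm⟩ : ∃ m, n = m + 1 := ⟨n - 1, by omega⟩
  have hsplit : p ^ n * (N / p ^ n) = N := Nat.ordProj_mul_ordCompl_eq_self N p
  set M := N / p ^ n with hMdef
  have hM : M ≠ 0 := (Nat.ordCompl_pos p hN).ne'
  have hnd : ¬ p ∣ M := Nat.not_dvd_ordCompl hp hN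
  have hgg : GG p N = GG p (p ^ n) * FF M := by
    conv_lhs => rw [← hsplit]
    exact GG_split p n M hp hM hnd
  have hps : psi N = ((p:ℝ) ^ n + (p:ℝ) ^ (n-1)) * psi M := by
    conv_lhs => rw [← hsplit]
    exact psi_mul_pp p n M hp hn hM hnd
  have hp1 : (1:ℝ) < (p:ℝ) := by exact_mod_cast hp.one_lt
  have hgeo : ((∑ i ∈ range n, p ^ i : ℕ) : ℝ) = ((p:ℝ) ^ n - 1) / ((p:ℝ) - 1) := by
    push_cast
    rw [geom_sum_eq (ne_of_gt hp1)]
  rw [hgg, GG_pp p n hp, hps, ← FF_eq_psi M hM]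
  push_cast [hgeo]
  have h1 : (p:ℝ) - 1 ≠ 0 := by linarith
  have h2 : (p:ℝ) + 1 ≠ 0 := by linarith
  have h3 : (p:ℝ) ^ (n-1) ≠ 0 := pow_ne_zero _ (by linarith)
  have h4 : (p:ℝ) ^ 2 - 1 = ((p:ℝ) - 1) * ((p:ℝ) + 1) := by ring
  have h5 : (p:ℝ) ^ n + (p:ℝ) ^ (n - 1) = (p:ℝ) ^ (n-1) * ((p:ℝ) + 1) := by
    rw [hm]
    simp only [Nat.add_sub_cancel]
    ring
  rw [h4, h5]
  field_simp

lemma log_nat_eq (N a : ℕ) (hN : N ≠ 0) (ha : a ∣ N) (ha0 : a ≠ 0) :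
    Real.log a = ∑ p ∈ N.primeFactors, (a.factorization p : ℝ) * Real.log p := by
  have hsub : a.primeFactors ⊆ N.primeFactors := Nat.primeFactors_mono ha hN
  have hzero : ∀ p ∈ N.primeFactors, p ∉ a.primeFactors →
      (a.factorization p : ℝ) * Real.log p = 0 := by
    intro p _ hpa
    rw [← Nat.support_factorization] at hpa
    rw [Finsupp.notMem_support_iff.mp hpa, Nat.cast_zero, zero_mul]
  rw [← Finset.sum_subset hsub hzero]
  conv_lhs => rw [← Nat.factorization_prod_pow_eq_self ha0]
  rw [Finsupp.prod, Nat.support_factorization]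
  push_cast
  rw [Real.log_prod]
  · exact Finset.sum_congr rfl fun p hp => Real.log_pow _ _
  · intro p hp
    have hp' : p.Prime := Nat.prime_of_mem_primeFactors hp
    exact pow_ne_zero _ (Nat.cast_ne_zero.mpr hp'.pos.ne')

lemma sum_trm_log (N : ℕ) (hN : N ≠ 0) :
    ∑ a ∈ N.divisors, (trm N a : ℝ) * Real.log a = psi N * lam N := by
  have step1 : ∀ a ∈ N.divisors, (trm N a : ℝ) * Real.log a
      = ∑ p ∈ N.primeFactors, (trm N a : ℝ) * ((a.factorization p : ℝ) * Real.log p) := by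
    intro a ha
    rw [log_nat_eq N a hN (Nat.mem_divisors.mp ha).1 (Nat.pos_of_mem_divisors ha).ne',
      Finset.mul_sum]
  rw [Finset.sum_congr rfl step1, Finset.sum_comm]
  have step2 : ∀ p ∈ N.primeFactors,
      ∑ a ∈ N.divisors, (trm N a : ℝ) * ((a.factorization p : ℝ) * Real.log p)
      = psi N * ((((p : ℝ) ^ (N.factorization p) - 1) /
          ((p : ℝ) ^ (N.factorization p - 1) * ((p : ℝ) ^ 2 - 1))) * Real.log p) := by
    intro p hp
    have : ∑ a ∈ N.divisors, (trm N a : ℝ) * ((a.factorization p : ℝ) * Real.log p)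
        = (GG p N : ℝ) * Real.log p := by
      unfold GG
      push_cast
      rw [Finset.sum_mul]
      exact Finset.sum_congr rfl fun a _ => by ring
    rw [this, GG_eq N p hN hp]
    ring
  rw [Finset.sum_congr rfl step2, ← Finset.mul_sum]
  rfl

end NegSumAux


/-- For every positive integer `N` and every `τ` in the upper half-plane,
`-∑_{γ ∈ C_N} log Im(τ_γ) = ψ(N)(log N - 2λ_N - log Im τ)`. -/
theorem neg_sum_log_im_tauG (N : ℕ) (hN : 1 ≤ N) (z : ℂ) (hz : 0 < z.im) :
    -∑ g ∈ CN N, Real.log (tauG g z).im =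
      psi N * (Real.log N - 2 * lam N - Real.log z.im) := by
  classical
  have hN0 : N ≠ 0 := by omega
  have him : ∀ g ∈ CN N, Real.log (tauG g z).im
      = 2 * Real.log g.1 - Real.log N + Real.log z.im := by
    intro g hg
    obtain ⟨h1, h2, h3, -⟩ := (NegSumAux.mem_CN hN0).mp hg
    have hd1 : 1 ≤ g.2.2 := by omega
    have hIm : (tauG g z).im = g.1 * z.im / g.2.2 := by
      unfold tauG
      rw [show ((g.2.2 : ℂ)) = ((g.2.2 : ℝ) : ℂ) by push_cast; rfl, Complex.div_ofReal_im]
      simp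
    have ha0 : (g.1 : ℝ) ≠ 0 := by
      have : (0:ℝ) < g.1 := by exact_mod_cast h2
      linarith
    have hd0 : (g.2.2 : ℝ) ≠ 0 := by
      have : (0:ℝ) < g.2.2 := by exact_mod_cast hd1
      linarith
    have hlogN : Real.log N = Real.log g.1 + Real.log g.2.2 := by
      rw [← h1]
      push_cast
      exact Real.log_mul ha0 hd0
    rw [hIm, Real.log_div (by positivity) hd0, Real.log_mul ha0 hz.ne']
    rw [hlogN]
    ring
  rw [Finset.sum_congr rfl him,
    NegSumAux.sum_CN N hN0 (fun a => 2 * Real.log a - Real.log N + Real.log z.im)]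
  have expand : ∑ a ∈ N.divisors,
        (NegSumAux.trm N a : ℝ) * (2 * Real.log a - Real.log N + Real.log z.im)
      = 2 * (∑ a ∈ N.divisors, (NegSumAux.trm N a : ℝ) * Real.log a)
        - (Real.log N - Real.log z.im) * (∑ a ∈ N.divisors, (NegSumAux.trm N a : ℝ)) := by
    rw [Finset.mul_sum, Finset.mul_sum, ← Finset.sum_sub_distrib]
    exact Finset.sum_congr rfl fun a _ => by ring
  have hFF : ∑ a ∈ N.divisors, (NegSumAux.trm N a : ℝ) = psi N := by
    rw [← NegSumAux.FF_eq_psi N hN0]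
    unfold NegSumAux.FF
    push_cast
    rfl
  rw [expand, NegSumAux.sum_trm_log N hN0, hFF]
  ring


end
end

section
/- Let N₀ ≥ 3 be a real number, let a and c₀ be real numbers, and define the sequence (c_n)_{n≥0} by c_{n+1} = a + log 6 + log(1 + (log log N₀ + c_n)/log N₀) for n ≥ 0. Assume that 1 + (log log N₀ + c_n)/log N₀ > 0 for all n ≥ 0 and that a + log 6 + (log log N₀)/log N₀ ≥ 0. Then for all n ≥ 0, c_n ≤ c₀/(log N₀)ⁿ + (a + log 6) · (log N₀)/(log N₀ − 1) + (log log N₀)/(log N₀ − 1). -/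
open Complex Finset

noncomputable section

/-- Lemma 3 of the paper (abstract form): for the recursively defined sequence `c_n`,
`c_n ≤ c₀/(log N₀)ⁿ + (a + log 6) log N₀/(log N₀ - 1) + log log N₀/(log N₀ - 1)`. -/
theorem c_seq_bound (N₀ a : ℝ) (hN₀ : 3 ≤ N₀) (c : ℕ → ℝ)
    (hcrec : ∀ n : ℕ, c (n + 1) =
      a + Real.log 6 +
        Real.log (1 + (Real.log (Real.log N₀) + c n) / Real.log N₀))
    (hpos : ∀ n : ℕ, 0 < 1 + (Real.log (Real.log N₀) + c n) / Real.log N₀)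
    (hA : 0 ≤ a + Real.log 6 + Real.log (Real.log N₀) / Real.log N₀) :
    ∀ n : ℕ, c n ≤ c 0 / (Real.log N₀) ^ n
      + (a + Real.log 6) * Real.log N₀ / (Real.log N₀ - 1)
      + Real.log (Real.log N₀) / (Real.log N₀ - 1) := by
  have hL : 1 < Real.log N₀ := by
    have h3 : Real.exp 1 < 3 := by
      have := Real.exp_one_lt_d9; linarith
    calc 1 = Real.log (Real.exp 1) := (Real.log_exp 1).symm
      _ < Real.log N₀ := Real.log_lt_log (Real.exp_pos 1) (lt_of_lt_of_le h3 hN₀)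
  set L := Real.log N₀ with hLdef
  set A := a + Real.log 6 with hAdef
  set M := Real.log L with hMdef
  have hL0 : (0:ℝ) < L := by linarith
  have hL1 : (0:ℝ) < L - 1 := by linarith
  have hAM : 0 ≤ A * L + M := by
    have h := hA
    have : 0 ≤ (A + M / L) * L := mul_nonneg h hL0.le
    have hne : L ≠ 0 := ne_of_gt hL0
    field_simp at this
    linarith
  intro n
  induction n with
  | zero =>
    have e : A * L / (L - 1) + M / (L - 1) = (A * L + M) / (L - 1) := by ring
    have h2 : 0 ≤ (A * L + M) / (L - 1) := div_nonneg hAM hL1.le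
    rw [pow_zero, div_one]
    linarith
  | succ n ih =>
    have hlog : Real.log (1 + (M + c n) / L) ≤ (M + c n) / L := by
      have := Real.log_le_sub_one_of_pos (hpos n)
      linarith
    have hstep : c (n + 1) ≤ A + (M + c n) / L := by
      rw [hcrec n]; linarith
    have hmono : (M + c n) / L ≤ (M + (c 0 / L ^ n + A * L / (L - 1) + M / (L - 1))) / L := by
      gcongr
    have hLn : L ^ n ≠ 0 := pow_ne_zero n (ne_of_gt hL0)
    have key : A + (M + (c 0 / L ^ n + A * L / (L - 1) + M / (L - 1))) / L
        = c 0 / L ^ (n + 1) + A * L / (L - 1) + M / (L - 1) := by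
      field_simp
      ring
    linarith

end
end
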